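/- With Δ1 = m1/(a1+1), Δ2 = m2/(a2+1), and D = (αΔ2 − Δ1(S̄Δ2 + ω))² + δΔ2²(δ + 2α + 2S̄Δ1) + 2δωΔ1Δ2, the value q1 = (αΔ2 + δΔ2 + ωΔ1 + S̄Δ1Δ2 − √D)/(2S̄Δ1Δ2) together with q2 = ω/(ω + S̄Δ2(1 − q1)) satisfies the fixed point equation F(q1,q2) = (q1,q2), where F(u1,u2) = ((α + δu1u2 + S̄Δ1u1²)/(α + δ + S̄Δ1), (ω + S̄Δ2u1u2)/(ω + S̄Δ2)), assuming all parameters positive and q1 < 1. -/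

import Mathlib

theorem stmt_9 (α δ ω S m1 m2 a1 a2 : ℝ) (hα : 0 < α) (hδ : 0 < δ) (hω : 0 < ω)
    (hS : 0 < S) (hm1 : 0 < m1) (hm2 : 0 < m2) (ha1 : 0 < a1) (ha2 : 0 < a2)
    (Δ1 Δ2 D q1 q2 : ℝ)
    (hΔ1 : Δ1 = m1/(a1+1)) (hΔ2 : Δ2 = m2/(a2+1))
    (hD : D = (α*Δ2 - Δ1*(S*Δ2 + ω))^2 + δ*Δ2^2*(δ + 2*α + 2*S*Δ1) + 2*δ*ω*Δ1*Δ2)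
    (hq1 : q1 = (α*Δ2 + δ*Δ2 + ω*Δ1 + S*Δ1*Δ2 - Real.sqrt D)/(2*S*Δ1*Δ2))
    (hq2 : q2 = ω/(ω + S*Δ2*(1 - q1)))
    (hq1lt : q1 < 1) :
    (α + δ*q1*q2 + S*Δ1*q1^2)/(α + δ + S*Δ1) = q1 ∧
    (ω + S*Δ2*q1*q2)/(ω + S*Δ2) = q2 := by
  have h1 : 0 < Δ1 := by rw [hΔ1]; positivity
  have h2 : 0 < Δ2 := by rw [hΔ2]; positivity
  have hD0 : 0 ≤ D := by
    rw [hD]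
    have := sq_nonneg (α*Δ2 - Δ1*(S*Δ2 + ω))
    nlinarith [mul_pos hδ (mul_pos (mul_pos hω h1) h2), sq_nonneg Δ2,
      mul_pos hδ (mul_pos (mul_pos h2 h2) hα), mul_pos hδ (mul_pos h2 h2),
      mul_pos (mul_pos hδ (mul_pos h2 h2)) (mul_pos hS h1)]
  have hs : Real.sqrt D ^ 2 = D := Real.sq_sqrt hD0
  have hc : (2*S*Δ1*Δ2) ≠ 0 := by positivity
  have hkey : Real.sqrt D = α*Δ2 + δ*Δ2 + ω*Δ1 + S*Δ1*Δ2 - 2*S*Δ1*Δ2*q1 := by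
    rw [hq1]; field_simp; ring
  rw [hkey] at hs
  rw [hD] at hs
  have hw : 0 < ω + S*Δ2*(1 - q1) := by
    have := mul_pos (mul_pos hS h2) (sub_pos.mpr hq1lt)
    linarith
  have hq2w : q2 * (ω + S*Δ2*(1 - q1)) = ω := by
    rw [hq2]; field_simp
  constructor
  · have hA : (α + δ + S*Δ1) ≠ 0 := by positivity
    rw [div_eq_iff hA]
    have key : (4*Δ1*Δ2*(ω + S*Δ2*(1 - q1))) * (α + δ*q1*q2 + S*Δ1*q1^2) =
        (4*Δ1*Δ2*(ω + S*Δ2*(1 - q1))) * (q1*(α + δ + S*Δ1)) := by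
      linear_combination (1 - q1)*hs + 4*Δ1*Δ2*δ*q1*hq2w
    have hne : (4*Δ1*Δ2*(ω + S*Δ2*(1 - q1))) ≠ 0 := by positivity
    exact mul_left_cancel₀ hne key
  · have hB : (ω + S*Δ2) ≠ 0 := by positivity
    rw [div_eq_iff hB]
    linear_combination -hq2w
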